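/- arXiv:1806.06386 — 3 statements merged into one kernel-verified Lean document; each statement's English description precedes it below -/
import Mathlib

section
/- If a sequence of vectors λ₁, λ₂, … in ℤ^d is unbounded and γ₁, γ₂, … is any sequence of real numbers, then the sequence of functions x ↦ e^{iγ_n} · e^{i⟨λ_n, x⟩} on the torus 𝕋^d does not converge pointwise (i.e., there exists x ∈ 𝕋^d such that the sequence e^{iγ_n} e^{i⟨λ_n,x⟩} does not converge in ℂ). -/
open Filter Topology MeasureTheory

noncomputable def eChar {d : ℕ} (lam : Fin d → ℤ) (x : Fin d → AddCircle (2 * Real.pi)) : ℂ :=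
  ∏ j, (AddCircle.toCircle (lam j • x j) : ℂ)

section aux

open Complex

local notation "𝕋" => AddCircle (2 * Real.pi)

lemma two_pi_pos : (0 : ℝ) < 2 * Real.pi := by positivity

instance : Fact ((0:ℝ) < 2 * Real.pi) := ⟨two_pi_pos⟩

lemma eChar_eq {d : ℕ} (lam : Fin d → ℤ) (x : Fin d → 𝕋) :
    eChar lam x = ∏ j, (fourier (lam j) (x j) : ℂ) := by
  simp [eChar, fourier_apply]

lemma norm_eChar {d : ℕ} (lam : Fin d → ℤ) (x : Fin d → 𝕋) : ‖eChar lam x‖ = 1 := by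
  rw [eChar, norm_prod]
  exact Finset.prod_eq_one fun j _ => Circle.norm_coe _

lemma continuous_eChar {d : ℕ} (lam : Fin d → ℤ) : Continuous (eChar lam) := by
  have : (eChar lam) = fun x : Fin d → 𝕋 => ∏ j, (fourier (lam j) (x j) : ℂ) := by
    funext x; exact eChar_eq lam x
  rw [this]
  exact continuous_finset_prod _ fun j _ => (fourier (lam j)).continuous.comp (continuous_apply j)

lemma eChar_mul_conj {d : ℕ} (a b : Fin d → ℤ) (x : Fin d → 𝕋) :
    eChar a x * (starRingEnd ℂ) (eChar b x) = eChar (a - b) x := by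
  rw [eChar_eq, eChar_eq, eChar_eq, map_prod, ← Finset.prod_mul_distrib]
  refine Finset.prod_congr rfl fun j _ => ?_
  rw [← fourier_neg, ← fourier_add, Pi.sub_apply, sub_eq_add_neg]

lemma integral_fourier_zero {k : ℤ} (hk : k ≠ 0) :
    ∫ x : 𝕋, (fourier k x : ℂ) = 0 :=
  integral_eq_zero_of_add_right_eq_neg (fun x => fourier_add_half_inv_index hk two_pi_pos x)

lemma integral_eChar_zero {d : ℕ} {lam : Fin d → ℤ} (h : lam ≠ 0) :
    ∫ x : Fin d → 𝕋, eChar lam x = 0 := by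
  have : ∫ x : Fin d → 𝕋, eChar lam x
      = ∫ x : Fin d → 𝕋, ∏ j, (fourier (lam j) (x j) : ℂ) := by
    refine integral_congr_ae (ae_of_all _ fun x => eChar_eq lam x)
  rw [this, MeasureTheory.volume_pi, MeasureTheory.integral_fintype_prod_eq_prod
    (f := fun j (y : 𝕋) => (fourier (lam j) y : ℂ))]
  obtain ⟨j, hj⟩ : ∃ j, lam j ≠ 0 := by
    by_contra hc
    push_neg at hc
    exact h (funext hc)
  exact Finset.prod_eq_zero (Finset.mem_univ j) (integral_fourier_zero hj)

end aux

theorem stmt0 {d : ℕ} (Λ : ℕ → (Fin d → ℤ)) (γ : ℕ → ℝ)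
    (hΛ : ¬ ∃ C : ℝ, ∀ n, ‖(fun j => (Λ n j : ℝ))‖ ≤ C) :
    ∃ x : Fin d → AddCircle (2 * Real.pi),
      ¬ ∃ L : ℂ, Tendsto (fun n => Complex.exp (Complex.I * γ n) * eChar (Λ n) x)
        atTop (𝓝 L) := by
  by_contra hcon
  push_neg at hcon
  push_neg at hΛ
  set f : ℕ → (Fin d → AddCircle (2 * Real.pi)) → ℂ :=
    fun n x => Complex.exp (Complex.I * γ n) * eChar (Λ n) x with hf
  choose g hg using hcon
  -- basic facts
  have hnormexp : ∀ n, ‖Complex.exp (Complex.I * γ n)‖ = 1 := by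
    intro n
    rw [Complex.norm_exp]
    simp
  have hnorm : ∀ n x, ‖f n x‖ = 1 := by
    intro n x
    rw [hf]
    simp only [norm_mul, hnormexp, norm_eChar, one_mul]
  have hgnorm : ∀ x, ‖g x‖ = 1 := by
    intro x
    refine tendsto_nhds_unique ((hg x).norm) ?_
    exact tendsto_const_nhds.congr fun n => (hnorm n x).symm
  have hcontf : ∀ n, Continuous (f n) :=
    fun n => continuous_const.mul (continuous_eChar (Λ n))
  have hfm : ∀ n, AEStronglyMeasurable (f n)
      (volume : Measure (Fin d → AddCircle (2 * Real.pi))) :=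
    fun n => (hcontf n).aestronglyMeasurable
  have hgm : AEStronglyMeasurable g (volume : Measure (Fin d → AddCircle (2 * Real.pi))) :=
    aestronglyMeasurable_of_tendsto_ae atTop hfm (ae_of_all _ hg)
  -- frequently, Λ n ≠ Λ m
  have hfreq : ∀ m, ∃ᶠ n in atTop, Λ n ≠ Λ m := by
    intro m
    rw [frequently_atTop]
    intro N
    set C : ℝ := ((Finset.range (N + 1)).sup' (by simp) fun n => ‖(fun j => (Λ n j : ℝ))‖)
      ⊔ ‖(fun j => (Λ m j : ℝ))‖ with hC
    obtain ⟨n, hn⟩ := hΛ C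
    refine ⟨n, ?_, ?_⟩
    · by_contra hlt
      push_neg at hlt
      have : ‖(fun j => (Λ n j : ℝ))‖ ≤ C := by
        rw [hC]
        exact le_sup_of_le_left (Finset.le_sup' (f := fun n => ‖(fun j => (Λ n j : ℝ))‖) (Finset.mem_range.2 (Nat.lt_succ_of_lt hlt)))
      exact absurd this (not_le.2 hn)
    · intro heq
      have h1 : ‖(fun j => (Λ m j : ℝ))‖ ≤ C := le_sup_right
      rw [← heq] at h1
      exact absurd h1 (not_le.2 hn)
  -- orthogonality
  have horth : ∀ n m, Λ n ≠ Λ m → ∫ x, f n x * (starRingEnd ℂ) (f m x) = 0 := by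
    intro n m hne
    have hpt : ∀ x, f n x * (starRingEnd ℂ) (f m x)
        = (Complex.exp (Complex.I * γ n) * (starRingEnd ℂ) (Complex.exp (Complex.I * γ m)))
          * eChar (Λ n - Λ m) x := by
      intro x
      rw [hf]
      simp only [map_mul]
      rw [← eChar_mul_conj (Λ n) (Λ m) x]
      ring
    simp only [hpt]
    rw [integral_const_mul, integral_eChar_zero (sub_ne_zero.2 hne), mul_zero]
  -- step 1: ∫ g conj (f m) = 0
  have hstep1 : ∀ m, ∫ x, g x * (starRingEnd ℂ) (f m x) = 0 := by
    intro m
    have hDCT : Tendsto (fun n => ∫ x, f n x * (starRingEnd ℂ) (f m x)) atTop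
        (𝓝 (∫ x, g x * (starRingEnd ℂ) (f m x))) := by
      refine tendsto_integral_of_dominated_convergence (fun _ => (1 : ℝ))
        (fun n => (hfm n).mul ((Complex.continuous_conj.comp (hcontf m)).aestronglyMeasurable))
        (integrable_const 1) (fun n => ae_of_all _ fun x => ?_) (ae_of_all _ fun x => ?_)
      · rw [norm_mul, hnorm, RCLike.norm_conj, hnorm, one_mul]
      · exact (hg x).mul_const _
    refine tendsto_nhds_unique_of_frequently_eq hDCT tendsto_const_nhds ?_
    exact (hfreq m).mono fun n hne => horth n m hne
  -- step 2: ∫ g conj (f m) → ∫ g conj g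
  have hDCT2 : Tendsto (fun m => ∫ x, g x * (starRingEnd ℂ) (f m x)) atTop
      (𝓝 (∫ x, g x * (starRingEnd ℂ) (g x))) := by
    refine tendsto_integral_of_dominated_convergence (fun _ => (1 : ℝ))
      (fun m => hgm.mul ((Complex.continuous_conj.comp (hcontf m)).aestronglyMeasurable))
      (integrable_const 1) (fun m => ae_of_all _ fun x => ?_) (ae_of_all _ fun x => ?_)
    · rw [norm_mul, hgnorm, RCLike.norm_conj, hnorm, one_mul]
    · exact Tendsto.const_mul _ ((Complex.continuous_conj.tendsto _).comp (hg x))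
  have hzero : ∫ x, g x * (starRingEnd ℂ) (g x) = 0 := by
    refine tendsto_nhds_unique hDCT2 ?_
    simp only [hstep1]
    exact tendsto_const_nhds
  -- step 3: but ∫ g conj g = (2π)^d > 0
  have hone : ∀ x, g x * (starRingEnd ℂ) (g x) = 1 := by
    intro x
    rw [Complex.mul_conj, Complex.normSq_eq_norm_sq, hgnorm]
    norm_num
  rw [integral_congr_ae (ae_of_all _ hone), integral_const] at hzero
  have hvol : (volume (Set.univ : Set (Fin d → AddCircle (2 * Real.pi)))).toReal > 0 := by
    refine ENNReal.toReal_pos ?_ (measure_ne_top _ _)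
    rw [MeasureTheory.volume_pi, MeasureTheory.Measure.pi_univ]
    simp only [AddCircle.measure_univ, Finset.prod_const, Finset.card_univ, Fintype.card_fin]
    exact pow_ne_zero _ (by simp [ENNReal.ofReal_eq_zero, not_le, two_pi_pos, Real.pi_pos])
  rw [Complex.real_smul, mul_one] at hzero
  have : ((volume (Set.univ : Set (Fin d → AddCircle (2 * Real.pi)))).toReal : ℂ) ≠ 0 := by
    exact_mod_cast ne_of_gt hvol
  exact this (by exact_mod_cast hzero)
end

section
/- Let X be a compact metric space and Φ a family of self-maps of X. If for every real-valued continuous function f on X, every sequence in {f ∘ φ : φ ∈ Φ} has a pointwise convergent subsequence, then every sequence in Φ has a pointwise convergent subsequence (as maps X → X). -/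
open Filter Topology

theorem stmt16 {X : Type*} [MetricSpace X] [CompactSpace X] (Φ : Set (X → X))
    (h : ∀ f : C(X, ℝ), ∀ φ : ℕ → (X → X), (∀ n, φ n ∈ Φ) →
      ∃ k : ℕ → ℕ, StrictMono k ∧
        ∀ x, ∃ L : ℝ, Tendsto (fun i => f (φ (k i) x)) atTop (𝓝 L)) :
    ∀ φ : ℕ → (X → X), (∀ n, φ n ∈ Φ) →
      ∃ k : ℕ → ℕ, StrictMono k ∧
        ∀ x, ∃ y : X, Tendsto (fun i => φ (k i) x) atTop (𝓝 y) := by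
  intro φ hφ
  rcases isEmpty_or_nonempty X with hX | hX
  · exact ⟨id, strictMono_id, fun x => isEmptyElim x⟩
  obtain ⟨c, hc⟩ := TopologicalSpace.exists_dense_seq X
  set f : ℕ → C(X, ℝ) := fun j =>
    ⟨fun x => dist x (c j), Continuous.dist continuous_id continuous_const⟩ with hfdef
  -- one extraction step
  have step : ∀ (j : ℕ) (s : ℕ → ℕ), StrictMono s →
      ∃ s' : ℕ → ℕ, StrictMono s' ∧ (∃ t : ℕ → ℕ, StrictMono t ∧ s' = s ∘ t) ∧
        ∀ x, ∃ L, Tendsto (fun i => f j (φ (s' i) x)) atTop (𝓝 L) := by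
    intro j s hs
    obtain ⟨t, ht, hconv⟩ := h (f j) (fun n => φ (s n)) (fun n => hφ (s n))
    exact ⟨s ∘ t, hs.comp ht, ⟨t, ht, rfl⟩, hconv⟩
  choose stepF stepSM stepSub stepConv using step
  -- iterated extraction
  let G : ℕ → {s : ℕ → ℕ // StrictMono s} := fun j =>
    Nat.rec ⟨stepF 0 id strictMono_id, stepSM 0 id strictMono_id⟩
      (fun j p => ⟨stepF (j + 1) p.1 p.2, stepSM (j + 1) p.1 p.2⟩) j
  have convG : ∀ j, ∀ x, ∃ L, Tendsto (fun i => f j (φ ((G j).1 i) x)) atTop (𝓝 L) := by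
    intro j
    cases j with
    | zero => exact stepConv 0 id strictMono_id
    | succ j => exact stepConv (j + 1) (G j).1 (G j).2
  have sub : ∀ m j, m ≤ j → ∃ t : ℕ → ℕ, StrictMono t ∧ (G j).1 = (G m).1 ∘ t := by
    intro m j hmj
    induction j, hmj using Nat.le_induction with
    | base => exact ⟨id, strictMono_id, rfl⟩
    | succ j hmj ih =>
      obtain ⟨t, ht, hGt⟩ := ih
      obtain ⟨t', ht', hGt'⟩ := stepSub (j + 1) (G j).1 (G j).2
      refine ⟨t ∘ t', ht.comp ht', ?_⟩
      show (G (j + 1)).1 = _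
      rw [show (G (j + 1)).1 = stepF (j + 1) (G j).1 (G j).2 from rfl, hGt', hGt]
      rfl
  set k : ℕ → ℕ := fun i => (G i).1 i with hkdef
  have hkSM : StrictMono k := by
    intro i j hij
    obtain ⟨t, ht, hGt⟩ := sub i j hij.le
    have : k j = (G i).1 (t j) := by rw [hkdef]; simp only [hGt]; rfl
    rw [this]
    exact (G i).2 (lt_of_lt_of_le hij ht.le_apply)
  have key : ∀ m x, ∃ L, Tendsto (fun i => f m (φ (k i) x)) atTop (𝓝 L) := by
    intro m x
    obtain ⟨L, hL⟩ := convG m x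
    refine ⟨L, ?_⟩
    rw [tendsto_atTop'] at hL ⊢
    intro s hs
    obtain ⟨N, hN⟩ := hL s hs
    refine ⟨max m N, fun i hi => ?_⟩
    obtain ⟨t, ht, hGt⟩ := sub m i (le_trans (le_max_left _ _) hi)
    have hki : k i = (G m).1 (t i) := by rw [hkdef]; simp only [hGt]; rfl
    rw [hki]
    exact hN _ (le_trans (le_trans (le_max_right _ _) hi) ht.le_apply)
  -- uniqueness of limits in ℝ for cluster points
  have uniq : ∀ {u : ℕ → ℝ} {p L : ℝ}, MapClusterPt p atTop u →
      Tendsto u atTop (𝓝 L) → p = L := by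
    intro u p L hp hL
    exact eq_of_nhds_neBot (hp.clusterPt.mono hL).neBot
  refine ⟨k, hkSM, fun x => ?_⟩
  obtain ⟨y, σ, hσ, hy⟩ := CompactSpace.tendsto_subseq (fun i => φ (k i) x)
  have hyC : MapClusterPt y atTop (fun i => φ (k i) x) :=
    MapClusterPt.of_comp hσ.tendsto_atTop hy.mapClusterPt
  refine ⟨y, tendsto_nhds_of_unique_mapClusterPt fun z hz => ?_⟩
  have hdist : ∀ j : ℕ, dist z (c j) = dist y (c j) := by
    intro j
    obtain ⟨L, hL⟩ := key j x
    have hz' : MapClusterPt (f j z) atTop (fun i => f j (φ (k i) x)) :=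
      hz.continuousAt_comp (f j).continuous.continuousAt
    have hy' : MapClusterPt (f j y) atTop (fun i => f j (φ (k i) x)) :=
      hyC.continuousAt_comp (f j).continuous.continuousAt
    have e1 : f j z = L := uniq hz' hL
    have e2 : f j y = L := uniq hy' hL
    simpa [hfdef] using e1.trans e2.symm
  by_contra hzy
  have hpos : 0 < dist z y := dist_pos.mpr hzy
  obtain ⟨j, hj⟩ := hc.exists_dist_lt y (half_pos hpos)
  have : dist z y ≤ dist z (c j) + dist (c j) y := dist_triangle _ _ _
  rw [hdist j, dist_comm (c j) y] at this
  linarith [hj]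
end

section
/- Every infinite subset of ℤ^d contains an infinite Sidon subset. -/
open Filter Topology MeasureTheory

lemma norm_expI_sub_one_le (x : ℝ) : ‖Complex.exp (x * Complex.I) - 1‖ ≤ |x| := by
  have h1 : Complex.exp (x * Complex.I) - 1
      = ((Real.cos x - 1 : ℝ) : ℂ) + ((Real.sin x : ℝ) : ℂ) * Complex.I := by
    rw [Complex.exp_mul_I, ← Complex.ofReal_cos, ← Complex.ofReal_sin]
    push_cast; ring
  rw [h1, Complex.norm_add_mul_I]
  rw [← Real.sqrt_sq_eq_abs]
  apply Real.sqrt_le_sqrt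
  nlinarith [Real.sin_sq_add_cos_sq x, Real.one_sub_sq_div_two_le_cos (x := x)]

lemma norm_cexp_sub_cexp (α β : ℝ) :
    ‖(Circle.exp α : ℂ) - (Circle.exp β : ℂ)‖ ≤ |α - β| := by
  rw [Circle.coe_exp, Circle.coe_exp]
  have h : Complex.exp (α * Complex.I) - Complex.exp (β * Complex.I)
      = Complex.exp (β * Complex.I) * (Complex.exp ((α - β : ℝ) * Complex.I) - 1) := by
    rw [mul_sub, ← Complex.exp_add, mul_one]
    push_cast; ring_nf
  rw [h, norm_mul]
  have h2 : ‖Complex.exp ((β : ℂ) * Complex.I)‖ = 1 := by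
    rw [Complex.norm_exp_ofReal_mul_I]
  rw [h2, one_mul]
  exact norm_expI_sub_one_le _

lemma ap_mem_interval (c s L a : ℝ) (hs : 0 < s) (hsL : s ≤ L) :
    ∃ k : ℤ, a ≤ c + s * k ∧ c + s * k ≤ a + L := by
  refine ⟨⌈(a - c) / s⌉, ?_, ?_⟩
  · have h := Int.le_ceil ((a - c) / s)
    have := mul_le_mul_of_nonneg_left h hs.le
    rw [mul_div_cancel₀ _ hs.ne'] at this
    linarith
  · have h := Int.ceil_lt_add_one ((a - c) / s)
    have := mul_lt_mul_of_pos_left h hs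
    rw [mul_add, mul_one, mul_div_cancel₀ _ hs.ne'] at this
    linarith

lemma phase_hit (m : ℤ) (hm : m ≠ 0) (a t L : ℝ) (hL : 2 * Real.pi / |(m : ℝ)| ≤ L) :
    ∃ θ : ℝ, a ≤ θ ∧ θ ≤ a + L ∧ Circle.exp ((m : ℝ) * θ) = Circle.exp t := by
  have hmR : (m : ℝ) ≠ 0 := Int.cast_ne_zero.2 hm
  have habs : (0 : ℝ) < |(m : ℝ)| := abs_pos.2 hmR
  set s : ℝ := 2 * Real.pi / |(m : ℝ)| with hs_def
  have hs : 0 < s := div_pos (by positivity) habs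
  obtain ⟨k, hk1, hk2⟩ := ap_mem_interval (t / m) s L a hs hL
  refine ⟨t / m + s * k, hk1, hk2, ?_⟩
  have ht : (m : ℝ) * (t / m) = t := by field_simp
  rcases abs_cases ((m : ℝ)) with ⟨he, _⟩ | ⟨he, _⟩
  · have hms : (m : ℝ) * s = 2 * Real.pi := by rw [hs_def, he]; field_simp
    refine Circle.exp_eq_exp.2 ⟨k, ?_⟩
    push_cast
    rw [mul_add, ht, ← mul_assoc, hms]; ring
  · have hms : (m : ℝ) * s = -(2 * Real.pi) := by
      rw [hs_def, he, div_neg, mul_neg, neg_inj, mul_comm, div_mul_cancel₀ _ hmR]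
    refine Circle.exp_eq_exp.2 ⟨-k, ?_⟩
    push_cast
    rw [mul_add, ht, ← mul_assoc, hms]; ring

lemma key_align (m : ℕ → ℤ) (h0 : 1 ≤ |m 0|) (hg : ∀ n, 32 * |m n| ≤ |m (n + 1)|)
    (t : ℕ → ℝ) (N : ℕ) :
    ∃ a : ℝ, ∀ θ ∈ Set.Icc a (a + 1 / (4 * |(m N : ℝ)|)), ∀ n ≤ N,
      ‖(Circle.exp ((m n : ℝ) * θ) : ℂ) - (Circle.exp (t n) : ℂ)‖ ≤ 1 / 2 := by
  have hpos : ∀ n, 1 ≤ |m n| := by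
    intro n
    induction n with
    | zero => exact h0
    | succ k ih => have := hg k; omega
  have hposR : ∀ n, (1 : ℝ) ≤ |(m n : ℝ)| := by
    intro n
    have := hpos n
    rw [← Int.cast_abs]
    exact_mod_cast this
  have hne : ∀ n, m n ≠ 0 := by
    intro n h
    have := hpos n
    rw [h] at this
    simp at this
  have hgR : ∀ n, 32 * |(m n : ℝ)| ≤ |(m (n + 1) : ℝ)| := by
    intro n
    have := hg n
    rw [← Int.cast_abs, ← Int.cast_abs]
    exact_mod_cast this
  have step : ∀ (n : ℕ) (θs θ : ℝ), θs ≤ θ → θ ≤ θs + 1 / (4 * |(m n : ℝ)|) →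
      ‖(Circle.exp ((m n : ℝ) * θ) : ℂ) - (Circle.exp ((m n : ℝ) * θs) : ℂ)‖ ≤ 1 / 2 := by
    intro n θs θ h1 h2
    refine (norm_cexp_sub_cexp _ _).trans ?_
    rw [← mul_sub, abs_mul]
    have hm : (0 : ℝ) < |(m n : ℝ)| := lt_of_lt_of_le one_pos (hposR n)
    have h3 : |θ - θs| ≤ 1 / (4 * |(m n : ℝ)|) := by
      rw [abs_sub_le_iff]; constructor <;> linarith
    have h4 := mul_le_mul_of_nonneg_left h3 (abs_nonneg ((m n : ℝ)))
    have h5 : |(m n : ℝ)| * (1 / (4 * |(m n : ℝ)|)) = 1 / 4 := by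
      field_simp
    linarith
  induction N with
  | zero =>
    refine ⟨t 0 / (m 0), fun θ hθ n hn => ?_⟩
    interval_cases n
    have he : Circle.exp (t 0) = Circle.exp ((m 0 : ℝ) * (t 0 / (m 0))) := by
      rw [mul_div_cancel₀ _ (Int.cast_ne_zero.2 (hne 0))]
    rw [he]
    exact step 0 _ θ hθ.1 hθ.2
  | succ N ih =>
    obtain ⟨a, ha⟩ := ih
    have hA : (0 : ℝ) < |(m N : ℝ)| := lt_of_lt_of_le one_pos (hposR N)
    have hB : (0 : ℝ) < |(m (N + 1) : ℝ)| := lt_of_lt_of_le one_pos (hposR (N + 1))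
    set A := |(m N : ℝ)|
    set B := |(m (N + 1) : ℝ)|
    set L : ℝ := 1 / (4 * A) - 1 / (4 * B) with hL_def
    have hL : 2 * Real.pi / B ≤ L := by
      rw [div_le_iff₀ hB, hL_def]
      have hu : (1 / (4 * A)) * (4 * A) = 1 := by
        field_simp
      have hv : (1 / (4 * B)) * B = 1 / 4 := by
        rw [div_mul_eq_mul_div, one_mul, div_eq_div_iff (by positivity) (by norm_num)]
        ring
      have hw : 0 ≤ (1 / (4 * A)) * (B - 32 * A) :=
        mul_nonneg (by positivity) (by linarith [hgR N])
      nlinarith [Real.pi_lt_d2]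
    obtain ⟨ts, hts1, hts2, htse⟩ := phase_hit (m (N + 1)) (hne (N + 1)) a (t (N + 1)) L hL
    refine ⟨ts, fun θ hθ n hn => ?_⟩
    by_cases hn' : n = N + 1
    · subst hn'
      rw [← htse]
      exact step (N + 1) ts θ hθ.1 hθ.2
    · have hnN : n ≤ N := by omega
      refine ha θ ⟨le_trans hts1 hθ.1, ?_⟩ n hnN
      have := hθ.2
      rw [hL_def] at hts2
      linarith

def IsSidon {d : ℕ} (Λ : Set (Fin d → ℤ)) : Prop :=
  ∃ γ : ℝ, 0 < γ ∧ ∀ s : Finset (Fin d → ℤ), ↑s ⊆ Λ → ∀ c : (Fin d → ℤ) → ℂ,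
    ∑ k ∈ s, ‖c k‖ ≤
      γ * ⨆ x : Fin d → AddCircle (2 * Real.pi), ‖∑ k ∈ s, c k * eChar k x‖

lemma norm_eChar_one {d : ℕ} (lam : Fin d → ℤ) (x : Fin d → AddCircle (2 * Real.pi)) :
    ‖eChar lam x‖ = 1 := by
  unfold eChar
  rw [norm_prod]
  exact Finset.prod_eq_one (fun j _ => Circle.norm_coe _)

theorem stmt17 {d : ℕ} (Λ : Set (Fin d → ℤ)) (hΛ : Λ.Infinite) :
    ∃ Λ' : Set (Fin d → ℤ), Λ' ⊆ Λ ∧ Λ'.Infinite ∧ IsSidon Λ' := by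
  classical
  have hj : ∃ j₀ : Fin d, ((fun v : Fin d → ℤ => v j₀) '' Λ).Infinite := by
    by_contra h
    push_neg at h
    have hfin : ∀ j, ((fun v : Fin d → ℤ => v j) '' Λ).Finite := fun j =>
      h j
    have hsub : Λ ⊆ Set.pi Set.univ (fun j => (fun v : Fin d → ℤ => v j) '' Λ) := by
      intro v hv j _
      exact ⟨v, hv, rfl⟩
    exact hΛ ((Set.Finite.pi fun j => hfin j).subset hsub)
  obtain ⟨j₀, hj₀⟩ := hj
  have hpick : ∀ B : ℤ, ∃ v, v ∈ Λ ∧ B < |v j₀| := by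
    intro B
    by_contra h
    push_neg at h
    have hsub : ((fun v : Fin d → ℤ => v j₀) '' Λ) ⊆ Set.Icc (-B) B := by
      rintro z ⟨v, hv, rfl⟩
      have := h v hv
      rw [Set.mem_Icc, ← abs_le]
      exact this
    exact hj₀ ((Set.finite_Icc _ _).subset hsub)
  choose g hg1 hg2 using hpick
  set f : ℕ → (Fin d → ℤ) :=
    fun n => Nat.rec (g 0) (fun _ prev => g (32 * |prev j₀|)) n with hf
  have hfs : ∀ n, f (n + 1) = g (32 * |f n j₀|) := fun n => rfl
  have hfΛ : ∀ n, f n ∈ Λ := by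
    intro n
    cases n with
    | zero => exact hg1 0
    | succ k => rw [hfs k]; exact hg1 _
  have h0 : 1 ≤ |f 0 j₀| := by
    have hf0 : f 0 = g 0 := rfl
    rw [hf0]
    have := hg2 0
    omega
  have hgrow : ∀ n, 32 * |f n j₀| ≤ |f (n + 1) j₀| := by
    intro n
    have := hg2 (32 * |f n j₀|)
    rw [hfs n]
    omega
  have hposn : ∀ n, 1 ≤ |f n j₀| := by
    intro n
    induction n with
    | zero => exact h0
    | succ k ih => have := hgrow k; omega
  have habs_mono : StrictMono (fun n => |f n j₀|) := by
    apply strictMono_nat_of_lt_succ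
    intro n
    have h1 := hgrow n
    have h2 := hposn n
    omega
  have hinj : Function.Injective f := fun p q h =>
    habs_mono.injective (by rw [h])
  refine ⟨Set.range f, ?_, Set.infinite_range_of_injective hinj, ?_⟩
  · rintro v ⟨n, rfl⟩; exact hfΛ n
  refine ⟨2, by norm_num, ?_⟩
  intro s hs c
  have hinjOn : Set.InjOn f (f ⁻¹' ↑s) := fun p _ q _ h => hinj h
  set F := s.preimage f hinjOn with hF
  have hrange : ∀ k ∈ s, k ∈ Set.range f := fun k hk => hs hk
  set N := F.sup id with hN
  set t : ℕ → ℝ := fun n => -Complex.arg (c (f n)) with ht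
  obtain ⟨a, ha⟩ := key_align (fun n => f n j₀) h0 hgrow t N
  have hθmem : a ∈ Set.Icc a (a + 1 / (4 * |((f N j₀ : ℤ) : ℝ)|)) := by
    constructor
    · exact le_refl a
    · have : (0:ℝ) ≤ 1 / (4 * |((f N j₀ : ℤ) : ℝ)|) := by positivity
      linarith
  have hbound : ∀ n ∈ F, ‖(Circle.exp ((f n j₀ : ℝ) * a) : ℂ) - (Circle.exp (t n) : ℂ)‖ ≤ 1 / 2 :=
    fun n hn => ha a hθmem n (Finset.le_sup (f := id) hn)
  set x₀ : Fin d → AddCircle (2 * Real.pi) :=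
    fun j => if j = j₀ then ((a : ℝ) : AddCircle (2 * Real.pi)) else 0 with hx₀
  have hechar : ∀ n : ℕ, eChar (f n) x₀ = (Circle.exp ((f n j₀ : ℝ) * a) : ℂ) := by
    intro n
    unfold eChar
    rw [Finset.prod_eq_single j₀]
    · rw [hx₀]
      simp only [eq_self_iff_true, if_true]
      rw [← AddCircle.coe_zsmul, AddCircle.toCircle_apply_mk]
      congr 1
      have hpi : (2 * Real.pi) ≠ 0 := by positivity
      rw [div_self hpi, one_mul, zsmul_eq_mul]
    · intro j _ hjne
      rw [hx₀]
      simp [hjne]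
    · intro h; exact absurd (Finset.mem_univ j₀) h
  have hsum1 : ∑ k ∈ s, ‖c k‖ = ∑ n ∈ F, ‖c (f n)‖ :=
    (Finset.sum_preimage f s hinjOn (fun k => ‖c k‖)
      (fun x hx hnx => absurd (hrange x hx) hnx)).symm
  have hsum2 : ∑ k ∈ s, c k * eChar k x₀
      = ∑ n ∈ F, c (f n) * (Circle.exp ((f n j₀ : ℝ) * a) : ℂ) := by
    rw [← Finset.sum_preimage f s hinjOn (fun k => c k * eChar k x₀)
      (fun x hx hnx => absurd (hrange x hx) hnx)]
    exact Finset.sum_congr rfl (fun n _ => by rw [hechar n])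
  have hterm : ∀ n ∈ F, ‖c (f n)‖ ≤
      2 * (c (f n) * (Circle.exp ((f n j₀ : ℝ) * a) : ℂ)).re := by
    intro n hn
    set z := c (f n) with hz
    set E : ℂ := (Circle.exp ((f n j₀ : ℝ) * a) : ℂ) with hE
    set V : ℂ := (Circle.exp (t n) : ℂ) with hV
    have hzv : z * V = (‖z‖ : ℂ) := by
      rw [hV, Circle.coe_exp, ht]
      conv_lhs => rw [← Complex.norm_mul_exp_arg_mul_I z]
      rw [mul_assoc, ← Complex.exp_add]
      push_cast
      ring_nf
      rw [← hz, mul_comm (z.arg : ℂ), sub_self, Complex.exp_zero, mul_one]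
    have hdiff : ‖E - V‖ ≤ 1 / 2 := hbound n hn
    have h1 : (z * E).re = ‖z‖ + (z * (E - V)).re := by
      have : z * E = z * V + z * (E - V) := by ring
      rw [this, hzv, Complex.add_re, Complex.ofReal_re]
    have h2 : |(z * (E - V)).re| ≤ ‖z‖ * (1 / 2) := by
      refine (Complex.abs_re_le_norm _).trans ?_
      rw [norm_mul]
      exact mul_le_mul_of_nonneg_left hdiff (norm_nonneg z)
    have h3 := (abs_le.1 h2).1
    have h4 : ‖z‖ = ‖z‖ := rfl
    rw [h1]
    rw [h4] at h3 ⊢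
    linarith
  have hre : ∑ n ∈ F, ‖c (f n)‖ ≤
      2 * (∑ n ∈ F, c (f n) * (Circle.exp ((f n j₀ : ℝ) * a) : ℂ)).re := by
    rw [Complex.re_sum, Finset.mul_sum]
    exact Finset.sum_le_sum hterm
  have hbdd : BddAbove (Set.range fun x : Fin d → AddCircle (2 * Real.pi) =>
      ‖∑ k ∈ s, c k * eChar k x‖) := by
    refine ⟨∑ k ∈ s, ‖c k‖, ?_⟩
    rintro r ⟨x, rfl⟩
    refine (norm_sum_le _ _).trans ?_
    refine Finset.sum_le_sum (fun k _ => ?_)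
    rw [norm_mul, norm_eChar_one, mul_one]
  have hsup : ‖∑ k ∈ s, c k * eChar k x₀‖ ≤
      ⨆ x : Fin d → AddCircle (2 * Real.pi), ‖∑ k ∈ s, c k * eChar k x‖ :=
    le_ciSup hbdd x₀
  have hre2 : (∑ n ∈ F, c (f n) * (Circle.exp ((f n j₀ : ℝ) * a) : ℂ)).re ≤
      ‖∑ k ∈ s, c k * eChar k x₀‖ := by
    rw [hsum2]
    exact Complex.re_le_norm _
  rw [hsum1]
  calc ∑ n ∈ F, ‖c (f n)‖
      ≤ 2 * (∑ n ∈ F, c (f n) * (Circle.exp ((f n j₀ : ℝ) * a) : ℂ)).re := hre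
    _ ≤ 2 * ‖∑ k ∈ s, c k * eChar k x₀‖ := by linarith
    _ ≤ 2 * ⨆ x : Fin d → AddCircle (2 * Real.pi), ‖∑ k ∈ s, c k * eChar k x‖ := by
        linarith
end
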